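/- Let G*_φ be an HNN extension of G along φ : A → B with stable letter z. If A = B = M₀ ≤ G and G₀ = ⟨M₀ ∪ {z}⟩ ≤ G*_φ, and φ is an automorphism of M₀, then G₀ is isomorphic to the HNN extension of M₀ along φ (i.e., the subgroup generated by M₀ and z is the 'free' extension of M₀ by z subject only to the relations z a z⁻¹ = φ(a), a ∈ M₀). -/

import Mathlib

open HNNExtension in
/-- In the HNN extension `G*_φ` of `G` along an automorphism `φ` of `M₀ ≤ G` with stable
letter `t`, the subgroup generated by `M₀ ∪ {t}` is (canonically isomorphic to) the HNN
extension of `M₀` along `φ`: the canonical homomorphism from `M₀*_φ` is injective with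
range the subgroup generated by `M₀ ∪ {t}`. -/
theorem hnn_subgroup_generated_is_hnn (G : Type) [Group G] (M₀ : Subgroup G)
    (φ : M₀ ≃* M₀)
    (ψ : (⊤ : Subgroup ↥M₀) ≃* (⊤ : Subgroup ↥M₀))
    (hψ : ψ = Subgroup.topEquiv.trans (φ.trans Subgroup.topEquiv.symm))
    (Φ : HNNExtension ↥M₀ ⊤ ⊤ ψ →* HNNExtension G M₀ M₀ φ)
    (hΦof : ∀ m : M₀, Φ (of (m : ↥M₀)) = of (m : G))
    (hΦt : Φ t = t) :
    Function.Injective Φ ∧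
      Φ.range =
        Subgroup.closure ((⇑(of : G →* HNNExtension G M₀ M₀ φ) '' (M₀ : Set G)) ∪
          {(t : HNNExtension G M₀ M₀ φ)}) := by
  constructor
  · rw [injective_iff_map_eq_one]
    intro x hx
    rcases NormalWord.TransversalPair.nonempty ↥M₀ ⊤ ⊤ with ⟨d⟩
    obtain ⟨w, hw⟩ : ∃ w : NormalWord d, w.prod ψ = x :=
      ⟨NormalWord.equiv ψ d x, (NormalWord.equiv ψ d).symm_apply_apply x⟩
    have hchain : (w.toList.map (fun p : ℤˣ × ↥M₀ => (p.1, (p.2 : G)))).IsChain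
        (fun a b => a.2 ∈ toSubgroup M₀ M₀ a.1 → a.1 = b.1) := by
      rw [List.isChain_map]
      refine w.chain.imp ?_
      intro a b h _
      refine h ?_
      rcases Int.units_eq_one_or a.1 with h1 | h1 <;> simp [h1, toSubgroup]
    let w' : NormalWord.ReducedWord G M₀ M₀ :=
      { head := (w.head : G)
        toList := w.toList.map (fun p => (p.1, (p.2 : G)))
        chain := hchain }
    have key : w'.prod φ = Φ (w.prod ψ) := by
      simp only [NormalWord.ReducedWord.prod, map_mul, map_list_prod, List.map_map,
        Function.comp_def, map_zpow, hΦt, hΦof, w']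
    have hmem : w'.prod φ ∈ (of.range : Subgroup (HNNExtension G M₀ M₀ φ)) := by
      rw [key, hw, hx]
      exact one_mem _
    have hnil := ReducedWord.toList_eq_nil_of_mem_of_range φ w' hmem
    have hnil' : w.toList = [] := by
      simpa [w'] using hnil
    have hx' : x = HNNExtension.of w.head := by
      rw [← hw]
      simp [NormalWord.ReducedWord.prod, hnil']
    have : Φ x = HNNExtension.of ((w.head : G)) := by rw [hx', hΦof]
    rw [hx] at this
    have h1 : (w.head : G) = 1 := by
      apply HNNExtension.of_injective (A := M₀) (B := M₀) (φ := φ)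
      rw [← this, map_one]
    have : w.head = 1 := Subtype.ext h1
    rw [hx', this, map_one]
  · apply le_antisymm
    · rintro _ ⟨x, rfl⟩
      induction x using HNNExtension.induction_on with
      | of g =>
        rw [hΦof]
        exact Subgroup.subset_closure (Or.inl ⟨g, g.2, rfl⟩)
      | t =>
        rw [hΦt]
        exact Subgroup.subset_closure (Or.inr rfl)
      | mul x y hx hy => rw [map_mul]; exact mul_mem hx hy
      | inv x hx => rw [map_inv]; exact inv_mem hx
    · rw [Subgroup.closure_le]
      rintro x (⟨g, hg, rfl⟩ | rfl)
      · exact ⟨of ⟨g, hg⟩, hΦof _⟩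
      · exact ⟨t, hΦt⟩
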